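/- arXiv:2210.07012 — 4 statements merged into one kernel-verified Lean document; each statement's English description precedes it below -/
import Mathlib

section
/- Fix an odd integer β ≥ 3, an integer D ≥ 1, and a real v_max > 0, and let Δ = 2·v_max/(β^D − 1). For every v ∈ ℝ with |v| ≤ v_max + Δ/2, the quantization error satisfies |v − q(v)| ≤ Δ/2; that is, the composition q = f_dec ∘ f_enc is a mid-tread uniform quantizer with step size Δ on the interval [−v_max − Δ/2, v_max + Δ/2]. -/
set_option maxHeartbeats 1000000

lemma digit_sum (b m : ℕ) : ∀ D, ∑ i ∈ Finset.range D, m / b^i % b * b^i = m % b^D := by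
  intro D
  induction D with
  | zero => simp [Nat.mod_one]
  | succ D ih =>
    rw [Finset.sum_range_succ, ih, pow_succ]
    have h1 : m % (b^D * b) % (b^D) = m % b^D := Nat.mod_mod_of_dvd _ ⟨b, rfl⟩
    have h2 : m % (b^D * b) / b^D = m / b^D % b := Nat.mod_mul_right_div_self m (b^D) b
    have h3 := Nat.div_add_mod (m % (b^D * b)) (b^D)
    rw [h1, h2, Nat.mul_comm] at h3
    omega



/-- Clamping of `v` to the interval `[-vmax, vmax]`. -/
noncomputable def clampR (vmax v : ℝ) : ℝ := max (-vmax) (min v vmax)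

/-- The quantization index `n(v) = ⌊(ξ/v_max)·v' + ξ + 1/2⌋` where `ξ = (β^D − 1)/2` and
`v'` is the clamped value of `v`. -/
noncomputable def qidx (β D : ℕ) (vmax v : ℝ) : ℤ :=
  ⌊(((β : ℝ) ^ D - 1) / 2 / vmax) * clampR vmax v + ((β : ℝ) ^ D - 1) / 2 + 1 / 2⌋

/-- The `i`th base-`β` digit `b_i(v) ∈ {0,…,β−1}` of the quantization index `n(v)`. -/
noncomputable def bdigit (β D : ℕ) (vmax v : ℝ) (i : ℕ) : ℕ :=
  (qidx β D vmax v).toNat / β ^ i % β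

/-- The `i`th balanced numeral `x_i(v) = b_i(v) − (β−1)/2`. -/
noncomputable def numeral (β D : ℕ) (vmax v : ℝ) (i : ℕ) : ℤ :=
  (bdigit β D vmax v i : ℤ) - ((β : ℤ) - 1) / 2

/-- The quantizer (decoder composed with encoder)
`q(v) = (v_max/ξ)·Σ_{i=0}^{D−1} x_i(v)·β^i` where `ξ = (β^D − 1)/2`. -/
noncomputable def quant (β D : ℕ) (vmax v : ℝ) : ℝ :=
  vmax / (((β : ℝ) ^ D - 1) / 2) *
    ∑ i ∈ Finset.range D, (numeral β D vmax v i : ℝ) * (β : ℝ) ^ i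

/-- For an odd integer `β ≥ 3`, `D ≥ 1` and `v_max > 0`, with `Δ = 2·v_max/(β^D − 1)`,
the quantization error satisfies `|v − q(v)| ≤ Δ/2` for every `v` with
`|v| ≤ v_max + Δ/2`: the composition `q = f_dec ∘ f_enc` is a mid-tread uniform quantizer
with step size `Δ` on `[−v_max − Δ/2, v_max + Δ/2]`. -/
theorem quant_error_le (β D : ℕ) (hβ : 3 ≤ β) (hodd : Odd β) (hD : 1 ≤ D)
    (vmax : ℝ) (hv : 0 < vmax) (v : ℝ)
    (hvv : |v| ≤ vmax + 2 * vmax / ((β : ℝ) ^ D - 1) / 2) :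
    |v - quant β D vmax v| ≤ 2 * vmax / ((β : ℝ) ^ D - 1) / 2 := by
  have hβ3 : (3:ℕ) ≤ β ^ D := le_trans hβ (Nat.le_self_pow (by omega) β)
  have hE3 : (3:ℝ) ≤ (β:ℝ) ^ D := by exact_mod_cast hβ3
  set E : ℝ := (β:ℝ) ^ D - 1 with hEdef
  have hE : 0 < E := by rw [hEdef]; linarith
  set c := clampR vmax v with hc
  have hc1 : c ≤ vmax := max_le (by linarith) (min_le_right _ _)
  have hc2 : -vmax ≤ c := le_max_left _ _
  set n := qidx β D vmax v with hn
  have hy : n = ⌊E/2/vmax * c + E/2 + 1/2⌋ := by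
    rw [hn]; simp only [qidx, ← hEdef, ← hc]
  have hA : (n:ℝ) ≤ E/2/vmax * c + E/2 + 1/2 := by rw [hy]; exact Int.floor_le _
  have hB : E/2/vmax * c + E/2 + 1/2 - 1 < (n:ℝ) := by rw [hy]; exact Int.sub_one_lt_floor _
  have hpos : 0 < E/2/vmax := by positivity
  have hkey : E/2/vmax * vmax = E/2 := by field_simp
  have hlb : -(E/2) ≤ E/2/vmax * c := by
    have := mul_le_mul_of_nonneg_left hc2 hpos.le
    rw [mul_neg, hkey] at this; exact this
  have hub : E/2/vmax * c ≤ E/2 := by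
    have := mul_le_mul_of_nonneg_left hc1 hpos.le
    rwa [hkey] at this
  have hn0 : 0 ≤ n := by
    rw [hy]; exact Int.le_floor.mpr (by push_cast; linarith)
  have hnlt : n < ((β ^ D : ℕ) : ℤ) := by
    have h : (n:ℝ) < ((β ^ D : ℕ) : ℝ) := by push_cast; linarith
    exact_mod_cast h
  have hnat : n.toNat < β ^ D := by omega
  obtain ⟨m, hm⟩ := hodd
  have hdig : ∑ i ∈ Finset.range D, bdigit β D vmax v i * β ^ i = n.toNat := by
    simp only [bdigit, ← hn]
    rw [digit_sum β n.toNat D, Nat.mod_eq_of_lt hnat]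
  have hkm : ((β:ℤ) - 1) / 2 = (m:ℤ) := by
    have : (β:ℤ) = 2 * m + 1 := by exact_mod_cast hm
    omega
  have hS : (∑ i ∈ Finset.range D, (β:ℤ) ^ i) * ((β:ℤ) - 1) = (β:ℤ) ^ D - 1 :=
    geom_sum_mul _ _
  have hsum : ∑ i ∈ Finset.range D, (numeral β D vmax v i) * (β:ℤ) ^ i
      = (n : ℤ) - (m:ℤ) * ∑ i ∈ Finset.range D, (β:ℤ) ^ i := by
    simp only [numeral, hkm, sub_mul, Finset.sum_sub_distrib, Finset.mul_sum]
    congr 1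
    have h := congrArg (Nat.cast : ℕ → ℤ) hdig
    push_cast at h
    rw [Int.toNat_of_nonneg hn0] at h
    exact h
  have h2mS : 2 * ((m:ℤ) * ∑ i ∈ Finset.range D, (β:ℤ) ^ i) = (β:ℤ) ^ D - 1 := by
    have hk : (β:ℤ) - 1 = 2 * m := by
      have : (β:ℤ) = 2 * m + 1 := by exact_mod_cast hm
      omega
    rw [← hS, hk]; ring
  have hQ : quant β D vmax v = vmax / (E/2) * ((n:ℝ) - E/2) := by
    rw [quant, ← hEdef]
    congr 1
    have hr := congrArg (Int.cast : ℤ → ℝ) hsum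
    push_cast at hr
    rw [hr]
    have h2 := congrArg (Int.cast : ℤ → ℝ) h2mS
    push_cast at h2
    rw [← hEdef] at h2
    linarith
  have htpos : (0:ℝ) < 2 * vmax / E := by positivity
  by_cases h1 : v ≤ vmax
  · by_cases h2 : -vmax ≤ v
    · -- interior case
      have hcv : c = v := by rw [hc, clampR, min_eq_left h1, max_eq_right h2]
      rw [hcv] at hA hB
      have key : v - quant β D vmax v
          = (2 * vmax / E) * ((E/2/vmax * v + E/2 + 1/2) - 1/2 - (n:ℝ)) := by
        rw [hQ]; field_simp; ring
      rw [key, abs_mul, abs_of_pos htpos]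
      have habs : |(E/2/vmax * v + E/2 + 1/2) - 1/2 - (n:ℝ)| ≤ 1/2 := by
        rw [abs_le]; constructor <;> linarith
      calc 2 * vmax / E * |(E/2/vmax * v + E/2 + 1/2) - 1/2 - (n:ℝ)|
          ≤ 2 * vmax / E * (1/2) := by
            exact mul_le_mul_of_nonneg_left habs htpos.le
        _ = 2 * vmax / E / 2 := by ring
    · -- v < -vmax
      push_neg at h2
      have hcv : c = -vmax := by
        rw [hc, clampR, min_eq_left h1, max_eq_left h2.le]
      have hy0 : E/2/vmax * c + E/2 + 1/2 = 1/2 := by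
        rw [hcv, mul_neg, hkey]; ring
      have hne : n = 0 := by
        rw [hy, hy0]; norm_num
      have hqv : quant β D vmax v = -vmax := by
        rw [hQ, hne]; push_cast; field_simp; ring
      obtain ⟨hv1, hv2⟩ := abs_le.mp hvv
      rw [hqv, abs_le]
      constructor <;> [linarith; nlinarith [htpos]]
  · -- v > vmax
    push_neg at h1
    have hcv : c = vmax := by
      rw [hc, clampR, min_eq_right h1.le, max_eq_right (by linarith)]
    have hy0 : E/2/vmax * c + E/2 + 1/2 = E + 1/2 := by
      rw [hcv, hkey]; ring
    rw [hy0] at hA hB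
    have hng : ((β ^ D : ℕ) : ℤ) - 2 < n := by
      have h : ((β ^ D : ℕ) : ℝ) - 2 < (n:ℝ) := by
        push_cast; linarith
      exact_mod_cast h
    have hne : n = ((β ^ D : ℕ) : ℤ) - 1 := by omega
    have hNE : (n:ℝ) = E := by
      rw [hne, hEdef]; push_cast; ring
    have hqv : quant β D vmax v = vmax := by
      rw [hQ, hNE]; field_simp; ring
    obtain ⟨hv1, hv2⟩ := abs_le.mp hvv
    rw [hqv, abs_le]
    constructor <;> [nlinarith [htpos]; linarith]
end

section
/- Fix an odd integer β ≥ 3, an integer D ≥ 1, and a real v_max > 0, and let ξ = (β^D − 1)/2 and Δ = 2·v_max/(β^D − 1). If V is a real random variable uniformly distributed on the interval [−v_max − Δ/2, v_max + Δ/2], then the quantization index n(V) is uniformly distributed on the finite set {0, 1, …, β^D − 1}; in particular each numeral x_i(V) is uniformly distributed on the set {−(β−1)/2, …, (β−1)/2}. -/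
open MeasureTheory

lemma floor_half_eq (Δ x : ℝ) (hΔ : 0 < Δ) (m : ℤ) :
    ⌊x / Δ + 1 / 2⌋ = m ↔ Δ * m - Δ / 2 ≤ x ∧ x < Δ * m + Δ / 2 := by
  rw [Int.floor_eq_iff]
  constructor
  · rintro ⟨h1, h2⟩
    have h1' : ((m : ℝ) - 1 / 2) * Δ ≤ x := (le_div_iff₀ hΔ).mp (by linarith)
    have h2' : x < ((m : ℝ) + 1 / 2) * Δ := (div_lt_iff₀ hΔ).mp (by linarith)
    constructor <;> nlinarith
  · rintro ⟨h1, h2⟩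
    have h1' : ((m : ℝ) - 1 / 2) * Δ ≤ x := by nlinarith
    have h2' : x < ((m : ℝ) + 1 / 2) * Δ := by nlinarith
    have := (le_div_iff₀ hΔ).mpr h1'
    have := (div_lt_iff₀ hΔ).mpr h2'
    constructor <;> linarith

lemma clampR_mem (vmax v : ℝ) (hv : 0 ≤ vmax) : -vmax ≤ clampR vmax v ∧ clampR vmax v ≤ vmax := by
  unfold clampR
  constructor
  · exact le_max_left _ _
  · exact max_le (by linarith) (min_le_right _ _)

lemma le_clampR_iff (vmax v a : ℝ) (ha : -vmax < a) (ha2 : a ≤ vmax) :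
    a ≤ clampR vmax v ↔ a ≤ v := by
  unfold clampR
  rw [le_max_iff, le_min_iff]
  constructor
  · rintro (h | ⟨h, _⟩)
    · linarith
    · exact h
  · exact fun h => Or.inr ⟨h, ha2⟩

lemma clampR_lt_iff (vmax v b : ℝ) (hb : -vmax < b) (hb2 : b ≤ vmax) :
    clampR vmax v < b ↔ v < b := by
  unfold clampR
  rw [max_lt_iff, min_lt_iff]
  constructor
  · rintro ⟨_, (h | h)⟩
    · exact h
    · linarith
  · exact fun h => ⟨hb, Or.inl h⟩

lemma qidx_eq_iff (β D : ℕ) (vmax v : ℝ) (hv : 0 < vmax)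
    (hB : (2:ℝ) ≤ (β : ℝ) ^ D - 1) (m : ℤ) :
    qidx β D vmax v = m ↔
      (2 * vmax / ((β : ℝ) ^ D - 1)) * m - vmax - (2 * vmax / ((β : ℝ) ^ D - 1)) / 2
          ≤ clampR vmax v ∧
        clampR vmax v <
          (2 * vmax / ((β : ℝ) ^ D - 1)) * m - vmax + (2 * vmax / ((β : ℝ) ^ D - 1)) / 2 := by
  set Δ : ℝ := 2 * vmax / ((β : ℝ) ^ D - 1) with hΔdef
  have hB0 : (0:ℝ) < (β : ℝ) ^ D - 1 := by linarith
  have hΔ : 0 < Δ := by positivity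
  have hΔB : Δ * ((β : ℝ) ^ D - 1) = 2 * vmax := by
    rw [hΔdef, div_mul_cancel₀ _ hB0.ne']
  have harg : (((β : ℝ) ^ D - 1) / 2 / vmax) * clampR vmax v + ((β : ℝ) ^ D - 1) / 2 + 1 / 2
      = (clampR vmax v + vmax) / Δ + 1 / 2 := by
    rw [hΔdef]
    field_simp
  rw [qidx, harg, floor_half_eq _ _ hΔ]
  constructor <;> rintro ⟨h1, h2⟩ <;> constructor <;> linarith

lemma vol_qidx (β D : ℕ) (vmax : ℝ) (hv : 0 < vmax) (hB : (3:ℝ) ≤ (β : ℝ) ^ D)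
    (m : ℤ) (h0 : 0 ≤ m) (h1 : m ≤ (β : ℤ) ^ D - 1) :
    volume ({v : ℝ | qidx β D vmax v = m} ∩
        Set.Icc (-vmax - 2 * vmax / ((β : ℝ) ^ D - 1) / 2)
          (vmax + 2 * vmax / ((β : ℝ) ^ D - 1) / 2)) =
      ENNReal.ofReal (2 * vmax / ((β : ℝ) ^ D - 1)) := by
  have hB2 : (2:ℝ) ≤ (β : ℝ) ^ D - 1 := by linarith
  set Δ : ℝ := 2 * vmax / ((β : ℝ) ^ D - 1) with hΔdef
  have hB0 : (0:ℝ) < (β : ℝ) ^ D - 1 := by linarith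
  have hΔ : 0 < Δ := by rw [hΔdef]; positivity
  have hΔB : Δ * ((β : ℝ) ^ D - 1) = 2 * vmax := by
    rw [hΔdef, div_mul_cancel₀ _ hB0.ne']
  have hΔv : Δ ≤ vmax := by nlinarith
  have hcast : ((((β : ℤ) ^ D - 1) : ℤ) : ℝ) = (β : ℝ) ^ D - 1 := by push_cast; ring
  rcases eq_or_lt_of_le h0 with h0' | h0'
  · -- m = 0
    subst h0'
    have hset : {v : ℝ | qidx β D vmax v = 0} = Set.Iio (-vmax + Δ / 2) := by
      ext v
      rw [Set.mem_setOf_eq, qidx_eq_iff β D vmax v hv hB2, Set.mem_Iio]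
      simp only [Int.cast_zero, mul_zero]
      constructor
      · rintro ⟨_, h2⟩
        rw [← clampR_lt_iff vmax v _ (by linarith) (by linarith)]
        linarith
      · intro h
        refine ⟨?_, ?_⟩
        · linarith [(clampR_mem vmax v hv.le).1]
        · rw [clampR_lt_iff vmax v _ (by linarith) (by linarith)]
          linarith
    rw [hset]
    have : Set.Iio (-vmax + Δ / 2) ∩
        Set.Icc (-vmax - Δ / 2) (vmax + Δ / 2) =
        Set.Ico (-vmax - Δ / 2) (-vmax + Δ / 2) := by
      ext x
      simp only [Set.mem_inter_iff, Set.mem_Iio, Set.mem_Icc, Set.mem_Ico]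
      constructor
      · rintro ⟨h, h', _⟩; exact ⟨h', h⟩
      · rintro ⟨h, h'⟩; exact ⟨h', h, by linarith⟩
    rw [this, Real.volume_Ico]
    congr 1; ring
  · rcases eq_or_lt_of_le h1 with h1' | h1'
    · -- m = β^D - 1
      subst h1'
      have hset : {v : ℝ | qidx β D vmax v = (β : ℤ) ^ D - 1} =
          Set.Ici (vmax - Δ / 2) := by
        ext v
        rw [Set.mem_setOf_eq, qidx_eq_iff β D vmax v hv hB2, Set.mem_Ici, hcast]
        constructor
        · rintro ⟨h2, _⟩
          rw [← le_clampR_iff vmax v _ (by nlinarith) (by linarith)]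
          nlinarith
        · intro h
          refine ⟨?_, ?_⟩
          · rw [le_clampR_iff vmax v _ (by nlinarith) (by linarith)]
            nlinarith
          · nlinarith [(clampR_mem vmax v hv.le).2]
      rw [hset]
      have : Set.Ici (vmax - Δ / 2) ∩
          Set.Icc (-vmax - Δ / 2) (vmax + Δ / 2) =
          Set.Icc (vmax - Δ / 2) (vmax + Δ / 2) := by
        ext x
        simp only [Set.mem_inter_iff, Set.mem_Ici, Set.mem_Icc]
        constructor
        · rintro ⟨h, _, h''⟩; exact ⟨h, h''⟩
        · rintro ⟨h, h'⟩; exact ⟨h, by linarith, h'⟩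
      rw [this, Real.volume_Icc]
      congr 1; ring
    · -- middle
      have hm1 : (1:ℝ) ≤ (m : ℝ) := by exact_mod_cast h0'
      have hm2 : (m : ℝ) ≤ (β : ℝ) ^ D - 2 := by
        have : m ≤ (β : ℤ) ^ D - 2 := by omega
        calc (m:ℝ) ≤ (((β : ℤ) ^ D - 2 : ℤ) : ℝ) := by exact_mod_cast this
        _ = (β : ℝ) ^ D - 2 := by push_cast; ring
      have ha1 : -vmax < Δ * m - vmax - Δ / 2 := by nlinarith
      have hb2 : Δ * m - vmax + Δ / 2 ≤ vmax := by nlinarith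
      have hset : {v : ℝ | qidx β D vmax v = m} =
          Set.Ico (Δ * m - vmax - Δ / 2) (Δ * m - vmax + Δ / 2) := by
        ext v
        rw [Set.mem_setOf_eq, qidx_eq_iff β D vmax v hv hB2, Set.mem_Ico,
          le_clampR_iff vmax v _ ha1 (by linarith),
          clampR_lt_iff vmax v _ (by linarith) hb2]
      rw [hset]
      have : Set.Ico (Δ * m - vmax - Δ / 2) (Δ * m - vmax + Δ / 2) ∩
          Set.Icc (-vmax - Δ / 2) (vmax + Δ / 2) =
          Set.Ico (Δ * m - vmax - Δ / 2) (Δ * m - vmax + Δ / 2) := by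
        rw [Set.inter_eq_left]
        rintro x ⟨hx1, hx2⟩
        exact ⟨by nlinarith, by linarith⟩
      rw [this, Real.volume_Ico]
      congr 1; ring

lemma measurable_qidx (β D : ℕ) (vmax : ℝ) : Measurable (qidx β D vmax) := by
  have hc : Continuous (clampR vmax) := continuous_const.max (continuous_id.min continuous_const)
  exact (((hc.measurable.const_mul _).add_const _).add_const _).floor

lemma qidx_bounds (β D : ℕ) (vmax : ℝ) (hv : 0 < vmax) (hB : (3:ℝ) ≤ (β : ℝ) ^ D) (v : ℝ) :
    0 ≤ qidx β D vmax v ∧ qidx β D vmax v ≤ (β : ℤ) ^ D - 1 := by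
  have hB0 : (0:ℝ) < (β : ℝ) ^ D - 1 := by linarith
  obtain ⟨hc1, hc2⟩ := clampR_mem vmax v hv.le
  have hk : (0:ℝ) ≤ ((β : ℝ) ^ D - 1) / 2 / vmax := by positivity
  have hkv : ((β : ℝ) ^ D - 1) / 2 / vmax * vmax = ((β : ℝ) ^ D - 1) / 2 := by
    field_simp
  constructor
  · rw [qidx, Int.le_floor]
    push_cast
    nlinarith [mul_le_mul_of_nonneg_left hc1 hk]
  · have : qidx β D vmax v < (β : ℤ) ^ D := by
      rw [qidx, Int.floor_lt]
      push_cast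
      nlinarith [mul_le_mul_of_nonneg_left hc2 hk]
    omega

lemma prob_qidx {Ω : Type*} [MeasurableSpace Ω]
    (P : Measure Ω) [IsProbabilityMeasure P]
    (β D : ℕ) (hβ : 3 ≤ β) (hD : 1 ≤ D)
    (vmax : ℝ) (hv : 0 < vmax)
    (V : Ω → ℝ) (hVmeas : Measurable V)
    (hlaw : Measure.map V P =
      (volume (Set.Icc (-vmax - 2 * vmax / ((β : ℝ) ^ D - 1) / 2)
          (vmax + 2 * vmax / ((β : ℝ) ^ D - 1) / 2)))⁻¹ •
        volume.restrict (Set.Icc (-vmax - 2 * vmax / ((β : ℝ) ^ D - 1) / 2)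
          (vmax + 2 * vmax / ((β : ℝ) ^ D - 1) / 2)))
    (m : ℤ) (h0 : 0 ≤ m) (h1 : m ≤ (β : ℤ) ^ D - 1) :
    P {ω | qidx β D vmax (V ω) = m} = ((β : ENNReal) ^ D)⁻¹ := by
  have hβ3 : (3:ℝ) ≤ (β : ℝ) := by exact_mod_cast hβ
  have hB : (3:ℝ) ≤ (β : ℝ) ^ D := le_trans hβ3 (le_self_pow₀ (by linarith) (by omega))
  have hB0 : (0:ℝ) < (β : ℝ) ^ D - 1 := by linarith
  set Δ : ℝ := 2 * vmax / ((β : ℝ) ^ D - 1) with hΔdef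
  have hΔ : 0 < Δ := by rw [hΔdef]; positivity
  have hΔB : Δ * ((β : ℝ) ^ D - 1) = 2 * vmax := by
    rw [hΔdef, div_mul_cancel₀ _ hB0.ne']
  have hS : MeasurableSet {v : ℝ | qidx β D vmax v = m} :=
    measurable_qidx β D vmax (measurableSet_singleton m)
  have hpre : {ω | qidx β D vmax (V ω) = m} = V ⁻¹' {v | qidx β D vmax v = m} := rfl
  rw [hpre, ← Measure.map_apply hVmeas hS, hlaw, Measure.smul_apply,
    Measure.restrict_apply hS, smul_eq_mul, vol_qidx β D vmax hv hB m h0 h1,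
    Real.volume_Icc]
  have hlen : vmax + Δ / 2 - (-vmax - Δ / 2) = Δ * (β : ℝ) ^ D := by
    nlinarith
  rw [hlen, ENNReal.ofReal_mul hΔ.le]
  have hof : ENNReal.ofReal ((β : ℝ) ^ D) = (β : ENNReal) ^ D := by
    rw [ENNReal.ofReal_pow (by positivity), ENNReal.ofReal_natCast]
  rw [hof]
  have hx0 : ENNReal.ofReal Δ ≠ 0 := by
    simp [ENNReal.ofReal_eq_zero]; linarith
  have hxt : ENNReal.ofReal Δ ≠ ⊤ := ENNReal.ofReal_ne_top
  rw [ENNReal.mul_inv (Or.inl hx0) (Or.inl hxt), mul_comm (ENNReal.ofReal Δ)⁻¹,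
    mul_assoc, ENNReal.inv_mul_cancel hx0 hxt, mul_one]
lemma card_digit (β A B d : ℕ) (hβ : 0 < β) (hB : 0 < B) (hd : d < β) :
    ((Finset.range (A * β * B)).filter (fun n => n / B % β = d)).card = A * B := by
  have hBβ : 0 < B * β := by positivity
  rw [show A * B = ((Finset.range A) ×ˢ (Finset.range B)).card by
    rw [Finset.card_product, Finset.card_range, Finset.card_range]]
  refine Finset.card_bij' (fun n _ => (n / (B * β), n % B))
    (fun p _ => B * β * p.1 + B * d + p.2) ?_ ?_ ?_ ?_
  · intro n hn
    rw [Finset.mem_filter, Finset.mem_range] at hn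
    rw [Finset.mem_product, Finset.mem_range, Finset.mem_range]
    refine ⟨?_, Nat.mod_lt _ hB⟩
    rw [Nat.div_lt_iff_lt_mul hBβ]
    calc n < A * β * B := hn.1
      _ = A * (B * β) := by ring
  · rintro ⟨a, b⟩ hp
    rw [Finset.mem_product, Finset.mem_range, Finset.mem_range] at hp
    obtain ⟨ha, hb⟩ := hp
    rw [Finset.mem_filter, Finset.mem_range]
    constructor
    · calc B * β * a + B * d + b < B * β * a + B * d + B := by omega
        _ = B * (β * a + d + 1) := by ring
        _ ≤ B * (β * a + β) := by
            have : d + 1 ≤ β := hd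
            exact Nat.mul_le_mul_left _ (by omega)
        _ = B * β * (a + 1) := by ring
        _ ≤ B * β * A := Nat.mul_le_mul_left _ (by omega)
        _ = A * β * B := by ring
    · show (B * β * a + B * d + b) / B % β = d
      have h1 : B * β * a + B * d + b = b + (β * a + d) * B := by ring
      rw [h1, Nat.add_mul_div_right _ _ hB, Nat.div_eq_of_lt hb, zero_add,
        Nat.mul_add_mod, Nat.mod_eq_of_lt hd]
  · intro n hn
    rw [Finset.mem_filter, Finset.mem_range] at hn
    have h3 := Nat.div_add_mod n (B * β)
    rw [Nat.mod_mul, hn.2] at h3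
    linarith [h3]
  · rintro ⟨a, b⟩ hp
    rw [Finset.mem_product, Finset.mem_range, Finset.mem_range] at hp
    obtain ⟨ha, hb⟩ := hp
    have hlt : B * d + b < B * β := by
      calc B * d + b < B * d + B := by omega
        _ = B * (d + 1) := by ring
        _ ≤ B * β := Nat.mul_le_mul_left _ (by omega)
    have h1 : (B * β * a + B * d + b) / (B * β) = a := by
      rw [show B * β * a + B * d + b = B * β * a + (B * d + b) by ring,
        Nat.mul_add_div hBβ, Nat.div_eq_of_lt hlt, add_zero]
    have h2 : (B * β * a + B * d + b) % B = b := by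
      rw [show B * β * a + B * d + b = b + (β * a + d) * B by ring,
        Nat.add_mul_mod_self_right, Nat.mod_eq_of_lt hb]
    simp [h1, h2]

open MeasureTheory in
/-- For an odd integer `β ≥ 3`, `D ≥ 1`, `v_max > 0` and `Δ = 2·v_max/(β^D − 1)`: if `V`
is uniformly distributed on `[−v_max − Δ/2, v_max + Δ/2]`, then the quantization index
`n(V)` is uniformly distributed on `{0,…,β^D − 1}`, and each numeral `x_i(V)` is uniformly
distributed on `{−(β−1)/2,…,(β−1)/2}`. -/
theorem qidx_uniform_of_uniform {Ω : Type*} [MeasurableSpace Ω]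
    (P : Measure Ω) [IsProbabilityMeasure P]
    (β D : ℕ) (hβ : 3 ≤ β) (hodd : Odd β) (hD : 1 ≤ D)
    (vmax : ℝ) (hv : 0 < vmax)
    (V : Ω → ℝ) (hVmeas : Measurable V)
    (hlaw : Measure.map V P =
      (volume (Set.Icc (-vmax - 2 * vmax / ((β : ℝ) ^ D - 1) / 2)
          (vmax + 2 * vmax / ((β : ℝ) ^ D - 1) / 2)))⁻¹ •
        volume.restrict (Set.Icc (-vmax - 2 * vmax / ((β : ℝ) ^ D - 1) / 2)
          (vmax + 2 * vmax / ((β : ℝ) ^ D - 1) / 2))) :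
    (∀ m : ℤ, 0 ≤ m → m ≤ (β : ℤ) ^ D - 1 →
        P {ω | qidx β D vmax (V ω) = m} = ((β : ENNReal) ^ D)⁻¹) ∧
      ∀ i < D, ∀ s : ℤ, |s| ≤ ((β : ℤ) - 1) / 2 →
        P {ω | numeral β D vmax (V ω) i = s} = (β : ENNReal)⁻¹ := by
  refine ⟨fun m h0 h1 => prob_qidx P β D hβ hD vmax hv V hVmeas hlaw m h0 h1, ?_⟩
  intro i hi s hs
  obtain ⟨k, hk⟩ := hodd
  have hkZ : (β : ℤ) = 2 * k + 1 := by exact_mod_cast hk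
  have hhalf : ((β : ℤ) - 1) / 2 = (k : ℤ) := by omega
  rw [hhalf] at hs
  have hsk : -(k : ℤ) ≤ s ∧ s ≤ (k : ℤ) := abs_le.mp hs
  set d : ℕ := (s + (k : ℤ)).toNat with hddef
  have hdZ : (d : ℤ) = s + (k : ℤ) := Int.toNat_of_nonneg (by omega)
  have hdβ : d < β := by omega
  have hβ3 : (3:ℝ) ≤ (β : ℝ) := by exact_mod_cast hβ
  have hB : (3:ℝ) ≤ (β : ℝ) ^ D := le_trans hβ3 (le_self_pow₀ (by linarith) (by omega))
  set T : Finset ℕ := (Finset.range (β ^ D)).filter (fun n => n / β ^ i % β = d) with hT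
  have hevent : {ω | numeral β D vmax (V ω) i = s} =
      ⋃ n ∈ T, {ω | qidx β D vmax (V ω) = (n : ℤ)} := by
    ext ω
    simp only [Set.mem_setOf_eq, Set.mem_iUnion, hT, Finset.mem_filter, Finset.mem_range]
    obtain ⟨hq0, hq1⟩ := qidx_bounds β D vmax hv hB (V ω)
    constructor
    · intro h
      refine ⟨(qidx β D vmax (V ω)).toNat, ⟨?_, ?_⟩, ?_⟩
      · have : ((qidx β D vmax (V ω)).toNat : ℤ) < (β : ℤ) ^ D := by
          rw [Int.toNat_of_nonneg hq0]; omega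
        have hcast : ((β ^ D : ℕ) : ℤ) = (β : ℤ) ^ D := by push_cast; ring
        exact_mod_cast this.trans_le (le_of_eq hcast.symm)
      · rw [numeral, hhalf] at h
        have : ((bdigit β D vmax (V ω) i : ℤ)) = s + (k : ℤ) := by omega
        rw [← hdZ] at this
        have hbd : bdigit β D vmax (V ω) i = d := by exact_mod_cast this
        rw [bdigit] at hbd
        exact hbd
      · rw [Int.toNat_of_nonneg hq0]
    · rintro ⟨n, ⟨hn1, hn2⟩, hq⟩
      rw [numeral, hhalf, bdigit, hq, Int.toNat_natCast, hn2]
      omega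
  rw [hevent]
  have hdisj : (↑T : Set ℕ).PairwiseDisjoint
      (fun n => {ω | qidx β D vmax (V ω) = (n : ℤ)}) := by
    intro a _ b _ hab
    apply Set.disjoint_left.mpr
    intro ω h1 h2
    simp only [Set.mem_setOf_eq] at h1 h2
    exact hab (by exact_mod_cast h1.symm.trans h2)
  have hmeas : ∀ n ∈ T, MeasurableSet {ω | qidx β D vmax (V ω) = (n : ℤ)} :=
    fun n _ => hVmeas (measurable_qidx β D vmax (measurableSet_singleton _))
  rw [measure_biUnion_finset hdisj hmeas]
  have hterm : ∀ n ∈ T, P {ω | qidx β D vmax (V ω) = (n : ℤ)} = ((β : ENNReal) ^ D)⁻¹ := by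
    intro n hn
    rw [hT, Finset.mem_filter, Finset.mem_range] at hn
    refine prob_qidx P β D hβ hD vmax hv V hVmeas hlaw n (by positivity) ?_
    have : (n : ℤ) < ((β ^ D : ℕ) : ℤ) := by exact_mod_cast hn.1
    have hcast : ((β ^ D : ℕ) : ℤ) = (β : ℤ) ^ D := by push_cast; ring
    omega
  rw [Finset.sum_congr rfl hterm, Finset.sum_const, nsmul_eq_mul]
  have hcard : T.card = β ^ (D - 1 - i) * β ^ i := by
    rw [hT, show β ^ D = β ^ (D - 1 - i) * β * β ^ i by
      rw [← pow_succ, ← pow_add]; congr 1; omega]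
    exact card_digit β _ _ d (by omega) (by positivity) hdβ
  rw [hcard]
  have hb0 : (β : ENNReal) ≠ 0 := by
    simp only [ne_eq, Nat.cast_eq_zero]; omega
  have hbt : (β : ENNReal) ≠ ⊤ := ENNReal.natCast_ne_top β
  have hp0 : (β : ENNReal) ^ (D - 1) ≠ 0 := pow_ne_zero _ hb0
  have hpt : (β : ENNReal) ^ (D - 1) ≠ ⊤ := ENNReal.pow_ne_top hbt
  have hcast2 : ((β ^ (D - 1 - i) * β ^ i : ℕ) : ENNReal) = (β : ENNReal) ^ (D - 1) := by
    push_cast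
    rw [← pow_add]
    congr 1
    omega
  rw [hcast2, show D = (D - 1) + 1 by omega, pow_succ,
    ENNReal.mul_inv (Or.inl hp0) (Or.inl hpt), ← mul_assoc, Nat.add_sub_cancel,
    ENNReal.mul_inv_cancel hp0 hpt, one_mul]
end

section
/- Fix an odd integer β ≥ 3 and integers D ≥ 1, K ≥ 1, R ≥ 1, a real σ² ≥ 0, and a real v_max > 0; let ξ = (β^D − 1)/2 and E_s = β − 1. Let X_{i,ℓ}, for i ∈ {0,…,D−1} and ℓ ∈ {0,…,β−2}, be random variables each having binomial distribution with K trials and success probability 1/β. Then E[(v_max²/(ξ²·R·K²))·Σ_{i=0}^{D−1} Σ_{ℓ=0}^{β−2} f_bal(ℓ)²·(X_{i,ℓ} + σ²/E_s)²·β^{2i}] = (v_max²/(3R))·(1/β + (1/K)·((β−1)/β + 2σ²/(β−1)) + β·σ⁴/(K²·(β−1)²))·((β^D + 1)/(β^D − 1)). -/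
open Finset


set_option maxHeartbeats 1000000

lemma sum_choose_mul (n : ℕ) (p q : ℝ) :
    ∑ k ∈ range (n+1), (n.choose k : ℝ) * p^k * q^(n-k) = (p+q)^n := by
  rw [add_pow]
  exact sum_congr rfl fun k _ => by ring

lemma key_choose (m k : ℕ) : (k+1) * (m+1).choose (k+1) = (m+1) * m.choose k := by
  rw [mul_comm]
  exact (Nat.add_one_mul_choose_eq m k).symm

lemma key_choose' (m k : ℕ) :
    ((k:ℝ)+1) * ((m+1).choose (k+1) : ℝ) = ((m:ℝ)+1) * (m.choose k : ℝ) := by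
  exact_mod_cast congrArg (Nat.cast (R := ℝ)) (key_choose m k)

lemma sum_k_choose (n : ℕ) (p q : ℝ) :
    ∑ k ∈ range (n+1), (k:ℝ) * (n.choose k : ℝ) * p^k * q^(n-k)
      = n * p * (p+q)^(n-1) := by
  cases n with
  | zero => simp
  | succ m =>
    rw [Finset.sum_range_succ']
    simp only [Nat.cast_zero, zero_mul, add_zero, Nat.succ_sub_succ, Nat.cast_succ]
    have : ∀ k ∈ range (m+1),
        ((k:ℝ)+1) * ((m+1).choose (k+1) : ℝ) * p^(k+1) * q^(m-k)
          = ((m:ℝ)+1) * p * ((m.choose k : ℝ) * p^k * q^(m-k)) := by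
      intro k _
      rw [key_choose' m k]; ring
    rw [Finset.sum_congr rfl this, ← Finset.mul_sum, sum_choose_mul]
    simp

lemma sum_kk_choose (n : ℕ) (p q : ℝ) :
    ∑ k ∈ range (n+1), (k:ℝ) * ((k:ℝ)-1) * (n.choose k : ℝ) * p^k * q^(n-k)
      = n * (n-1) * p^2 * (p+q)^(n-2) := by
  match n with
  | 0 => simp
  | 1 => norm_num [Finset.sum_range_succ]
  | (m+2) =>
    rw [Finset.sum_range_succ', Finset.sum_range_succ']
    have : ∀ k ∈ range (m+1),
        ((k+1+1:ℕ):ℝ) * (((k+1+1:ℕ):ℝ)-1) * ((m+2).choose (k+1+1) : ℝ)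
            * p^(k+1+1) * q^(m+2-(k+1+1))
          = ((m:ℝ)+2) * ((m:ℝ)+1) * p^2 * ((m.choose k : ℝ) * p^k * q^(m-k)) := by
      intro k _
      have hq : m+2-(k+1+1) = m - k := by omega
      rw [hq]
      have a1 := key_choose' (m+1) (k+1)
      have a2 := key_choose' m k
      push_cast at a1 a2 ⊢
      linear_combination (((k:ℝ)+1) * p^(k+1+1) * q^(m-k)) * a1 +
        (((m:ℝ)+2) * p^(k+1+1) * q^(m-k)) * a2
    rw [Finset.sum_congr rfl this, ← Finset.mul_sum, sum_choose_mul]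
    have h2 : m + 2 - 2 = m := rfl
    rw [h2]
    push_cast
    ring

/-- Second moment of (X + c)² under binomial weights, p + q = 1. -/
lemma binom_sq_sum (K : ℕ) (p c : ℝ) (hpq : p + (1-p) = 1) :
    ∑ k ∈ range (K+1), ((K.choose k : ℝ) * p^k * (1-p)^(K-k)) * ((k:ℝ)+c)^2
      = K*(K-1)*p^2 + (1+2*c)*(K*p) + c^2 := by
  have e : ∀ k ∈ range (K+1),
      ((K.choose k : ℝ) * p^k * (1-p)^(K-k)) * ((k:ℝ)+c)^2
        = (k:ℝ) * ((k:ℝ)-1) * (K.choose k : ℝ) * p^k * (1-p)^(K-k)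
          + (1+2*c) * ((k:ℝ) * (K.choose k : ℝ) * p^k * (1-p)^(K-k))
          + c^2 * ((K.choose k : ℝ) * p^k * (1-p)^(K-k)) := by
    intro k _; ring
  rw [Finset.sum_congr rfl e, Finset.sum_add_distrib, Finset.sum_add_distrib,
    ← Finset.mul_sum, ← Finset.mul_sum, sum_kk_choose, sum_k_choose, sum_choose_mul, hpq]
  simp [one_pow]

lemma fbal_sq_sum (m : ℕ) :
    (∑ j ∈ Finset.range (2*m),
      (if j % 2 = 1 then -(((j:ℤ)+1)/2) else ((j:ℤ)+2)/2)^2) * 3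
      = (m:ℤ)*((m:ℤ)+1)*(2*(m:ℤ)+1) := by
  induction m with
  | zero => simp
  | succ m ih =>
    have h2 : 2*(m+1) = (2*m) + 1 + 1 := by ring
    rw [h2, Finset.sum_range_succ, Finset.sum_range_succ]
    rw [if_neg (by omega : ¬ (2*m) % 2 = 1), if_pos (by omega : (2*m+1) % 2 = 1)]
    have v1 : (((2*m:ℕ):ℤ)+2)/2 = (m:ℤ)+1 := by push_cast; omega
    have v2 : -((((2*m+1:ℕ):ℤ)+1)/2) = -((m:ℤ)+1) := by push_cast; omega
    rw [v1, v2]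
    push_cast
    linear_combination ih

open MeasureTheory in
lemma nat_rv_ae_le {Ω : Type*} [MeasurableSpace Ω] (P : Measure Ω)
    (X : Ω → ℕ) (K : ℕ) (h0 : ∀ k, K < k → P {ω | X ω = k} = 0) :
    ∀ᵐ ω ∂P, X ω ≤ K := by
  have hsub : {ω | ¬ X ω ≤ K} ⊆ ⋃ k ∈ {k : ℕ | K < k}, {ω | X ω = k} := by
    intro ω h
    exact Set.mem_biUnion (by simpa using h) rfl
  have hnull : P (⋃ k ∈ {k : ℕ | K < k}, {ω | X ω = k}) = 0 :=
    (measure_biUnion_null_iff (Set.to_countable _)).2 fun k hk => h0 k hk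
  exact measure_mono_null hsub hnull

open MeasureTheory in
lemma integral_nat_rv {Ω : Type*} [MeasurableSpace Ω] (P : Measure Ω)
    [IsProbabilityMeasure P] (X : Ω → ℕ) (hX : Measurable X) (K : ℕ)
    (h0 : ∀ k, K < k → P {ω | X ω = k} = 0) (g : ℕ → ℝ) :
    Integrable (fun ω => g (X ω)) P ∧
    ∫ ω, g (X ω) ∂P
      = ∑ k ∈ range (K+1), (P {ω | X ω = k}).toReal * g k := by
  have hms : ∀ k : ℕ, MeasurableSet {ω | X ω = k} := fun k =>
    hX (measurableSet_singleton k)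
  set F : Ω → ℝ := fun ω =>
    ∑ k ∈ range (K+1), Set.indicator {ω | X ω = k} (fun _ => g k) ω with hF
  have hintk : ∀ k ∈ range (K+1),
      Integrable (fun ω => Set.indicator {ω | X ω = k} (fun _ => g k) ω) P := by
    intro k _
    exact (integrable_indicator_iff (hms k)).2
      (integrableOn_const (measure_lt_top _ _).ne)
  have hFint : Integrable F P := integrable_finset_sum _ hintk
  have hae : (fun ω => g (X ω)) =ᵐ[P] F := by
    filter_upwards [nat_rv_ae_le P X K h0] with ω hω
    have : ∀ k ∈ range (K+1),
        Set.indicator {ω' | X ω' = k} (fun _ => g k) ω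
          = if X ω = k then g k else 0 := by
      intro k _
      simp [Set.indicator_apply, Set.mem_setOf_eq]
    show g (X ω) = ∑ k ∈ range (K+1), Set.indicator {ω' | X ω' = k} (fun _ => g k) ω
    rw [Finset.sum_congr rfl this]
    simp only [eq_comm (a := X ω)]
    rw [Finset.sum_ite_eq' (range (K+1)) (X ω) (fun k => g k)]
    rw [if_pos (Finset.mem_range.2 (by omega))]
  constructor
  · exact hFint.congr hae.symm
  · rw [integral_congr_ae hae, hF, integral_finset_sum _ hintk]
    exact Finset.sum_congr rfl fun k _ => by
      rw [integral_indicator_const _ (hms k)]; simp [mul_comm, measureReal_def]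

lemma final_algebra (b y Kr Rr s v : ℝ) (hb0 : b ≠ 0) (hbm : b - 1 ≠ 0) (hbp : b + 1 ≠ 0)
    (hy : y - 1 ≠ 0) (hK : Kr ≠ 0) (hR : Rr ≠ 0) :
    v^2 / (((y-1)/2)^2 * Rr * Kr^2) *
      (((b-1)/2 * ((b-1)/2 + 1) * (2*((b-1)/2) + 1) / 3) *
        (Kr*(Kr-1)*(1/b)^2 + (1+2*(s/(b-1)))*(Kr*(1/b)) + (s/(b-1))^2) *
        ((y^2 - 1)/(b^2-1)))
      = v^2/(3*Rr) * (1/b + 1/Kr*((b-1)/b + 2*s/(b-1)) + b*s^2/(Kr^2*(b-1)^2)) * ((y+1)/(y-1)) := by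
  have hb2 : b^2 - 1 ≠ 0 := by
    have : b^2 - 1 = (b-1)*(b+1) := by ring
    rw [this]
    exact mul_ne_zero hbm hbp
  have hy2 : (y-1)^2 ≠ 0 := pow_ne_zero _ hy
  field_simp
  ring


/-- The balanced symbol map of a balanced base-`β` number system. -/
def fbal (β : ℕ) (j : ℕ) : ℤ :=
  if j = β - 1 then 0
  else if j % 2 = 1 then -(((j : ℤ) + 1) / 2)
  else ((j : ℤ) + 2) / 2

open MeasureTheory in
/-- Closed form of the channel-induced mean squared error `σ²_channel`: with `ξ = (β^D−1)/2`
and `E_s = β − 1`, if the activation counts `X_{i,ℓ}` are `Binomial(K, 1/β)`, then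
`E[(v_max²/(ξ²·R·K²))·Σ_i Σ_ℓ f_bal(ℓ)²·(X_{i,ℓ} + σ²/E_s)²·β^{2i}]` equals
`(v_max²/(3R))·(1/β + (1/K)·((β−1)/β + 2σ²/(β−1)) + β·σ⁴/(K²·(β−1)²))·((β^D+1)/(β^D−1))`. -/
theorem channel_mse_closed_form {Ω : Type*} [MeasurableSpace Ω]
    (P : Measure Ω) [IsProbabilityMeasure P]
    (β D K R : ℕ) (hβ : 3 ≤ β) (hodd : Odd β) (hD : 1 ≤ D) (hK : 1 ≤ K) (hR : 1 ≤ R)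
    (σ2 vmax : ℝ) (hσ : 0 ≤ σ2) (hv : 0 < vmax)
    (X : Fin D → Fin (β - 1) → Ω → ℕ) (hXmeas : ∀ i ℓ, Measurable (X i ℓ))
    (hlaw : ∀ i ℓ, ∀ k : ℕ, P {ω | X i ℓ ω = k} =
      ENNReal.ofReal ((K.choose k : ℝ) * (1 / (β : ℝ)) ^ k * (1 - 1 / (β : ℝ)) ^ (K - k))) :
    ∫ ω, vmax ^ 2 / ((((β : ℝ) ^ D - 1) / 2) ^ 2 * (R : ℝ) * (K : ℝ) ^ 2) *
        ∑ i : Fin D, ∑ ℓ : Fin (β - 1),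
          (fbal β ℓ : ℝ) ^ 2 * ((X i ℓ ω : ℝ) + σ2 / ((β : ℝ) - 1)) ^ 2 *
            (β : ℝ) ^ (2 * (i : ℕ)) ∂P
      = vmax ^ 2 / (3 * (R : ℝ)) *
          (1 / (β : ℝ) + 1 / (K : ℝ) * (((β : ℝ) - 1) / (β : ℝ) + 2 * σ2 / ((β : ℝ) - 1))
            + (β : ℝ) * σ2 ^ 2 / ((K : ℝ) ^ 2 * ((β : ℝ) - 1) ^ 2)) *
          (((β : ℝ) ^ D + 1) / ((β : ℝ) ^ D - 1)) := by
  have hbR : (3:ℝ) ≤ (β:ℝ) := by exact_mod_cast hβ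
  set c : ℝ := σ2 / ((β:ℝ) - 1) with hc
  set p : ℝ := 1 / (β:ℝ) with hp
  set M : ℝ := (K:ℝ)*((K:ℝ)-1)*p^2 + (1+2*c)*((K:ℝ)*p) + c^2 with hM
  -- zero probability above K
  have h0 : ∀ i ℓ, ∀ k, K < k → P {ω | X i ℓ ω = k} = 0 := by
    intro i ℓ k hk
    rw [hlaw, Nat.choose_eq_zero_of_lt hk]
    simp
  -- expectation of each term
  have hnn : ∀ k : ℕ, 0 ≤ (K.choose k : ℝ) * (1 / (β : ℝ)) ^ k * (1 - 1 / (β : ℝ)) ^ (K - k) := by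
    intro k
    have h1 : (0:ℝ) ≤ 1 - 1/(β:ℝ) := by
      have : 1/(β:ℝ) ≤ 1 := by
        rw [div_le_one (by linarith)]; linarith
      linarith
    positivity
  have hEX : ∀ i ℓ, ∫ ω, ((X i ℓ ω : ℝ) + c)^2 ∂P = M := by
    intro i ℓ
    have h := (integral_nat_rv P (X i ℓ) (hXmeas i ℓ) K (h0 i ℓ)
      (fun k => ((k:ℝ)+c)^2)).2
    rw [h]
    have : ∀ k ∈ range (K+1), (P {ω | X i ℓ ω = k}).toReal * ((k:ℝ)+c)^2
        = ((K.choose k : ℝ) * p ^ k * (1 - p) ^ (K - k)) * ((k:ℝ)+c)^2 := by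
      intro k _
      rw [hlaw, ENNReal.toReal_ofReal (hnn k)]
    rw [Finset.sum_congr rfl this, binom_sq_sum K p c (by ring)]
  have hInt : ∀ i ℓ, Integrable (fun ω => ((X i ℓ ω : ℝ) + c)^2) P := fun i ℓ =>
    (integral_nat_rv P (X i ℓ) (hXmeas i ℓ) K (h0 i ℓ) (fun k => ((k:ℝ)+c)^2)).1
  -- pull constants and sums out of the integral
  rw [integral_const_mul]
  have hsum_int : ∫ ω, (∑ i : Fin D, ∑ ℓ : Fin (β - 1),
      (fbal β ℓ : ℝ) ^ 2 * ((X i ℓ ω : ℝ) + c) ^ 2 * (β : ℝ) ^ (2 * (i : ℕ))) ∂P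
      = ∑ i : Fin D, ∑ ℓ : Fin (β - 1),
        (fbal β ℓ : ℝ) ^ 2 * M * (β : ℝ) ^ (2 * (i : ℕ)) := by
    rw [integral_finset_sum]
    · refine Finset.sum_congr rfl fun i _ => ?_
      rw [integral_finset_sum]
      · refine Finset.sum_congr rfl fun ℓ _ => ?_
        have hfe : (fun ω => (fbal β ℓ : ℝ) ^ 2 * ((X i ℓ ω : ℝ) + c) ^ 2
              * (β : ℝ) ^ (2 * (i : ℕ)))
            = fun ω => ((fbal β ℓ : ℝ) ^ 2 * (β : ℝ) ^ (2 * (i : ℕ)))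
              * (((X i ℓ ω : ℝ) + c) ^ 2) := funext fun ω => by ring
        rw [hfe, integral_const_mul, hEX i ℓ]
        ring
      · intro ℓ _
        exact (((hInt i ℓ).const_mul _).mul_const _)
    · intro i _
      exact integrable_finset_sum _ fun ℓ _ =>
        (((hInt i ℓ).const_mul _).mul_const _)
  rw [hsum_int]
  -- restructure the double sum
  have hres : ∑ i : Fin D, ∑ ℓ : Fin (β - 1),
      (fbal β ℓ : ℝ) ^ 2 * M * (β : ℝ) ^ (2 * (i : ℕ))
      = ((∑ ℓ : Fin (β - 1), (fbal β ℓ : ℝ) ^ 2) * M)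
        * ∑ i ∈ range D, ((β:ℝ)^2)^i := by
    rw [← Fin.sum_univ_eq_sum_range (fun i => ((β:ℝ)^2)^i) D, Finset.mul_sum]
    refine Finset.sum_congr rfl fun i _ => ?_
    rw [pow_mul ((β:ℝ)) 2 (i:ℕ)]
    rw [← Finset.sum_mul, ← Finset.sum_mul]
  rw [hres]
  -- the fbal square sum
  obtain ⟨m, hm⟩ := hodd
  have hm1 : β - 1 = 2*m := by omega
  have hZ : (∑ j ∈ range (β-1), (fbal β j)^2) * 3
      = (m:ℤ)*((m:ℤ)+1)*(2*(m:ℤ)+1) := by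
    rw [hm1, ← fbal_sq_sum m]
    congr 1
    refine Finset.sum_congr rfl fun j hj => ?_
    have hjlt : j < 2*m := Finset.mem_range.1 hj
    have : fbal β j = if j % 2 = 1 then -(((j:ℤ)+1)/2) else ((j:ℤ)+2)/2 := by
      unfold fbal
      rw [if_neg (by omega)]
    rw [this]
  have hSa : (∑ ℓ : Fin (β - 1), (fbal β ℓ : ℝ) ^ 2)
      = ((m:ℝ)*((m:ℝ)+1)*(2*(m:ℝ)+1))/3 := by
    rw [Fin.sum_univ_eq_sum_range (fun j => ((fbal β j : ℝ))^2) (β-1)]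
    have : (∑ j ∈ range (β-1), ((fbal β j : ℝ))^2)
        = (((∑ j ∈ range (β-1), (fbal β j)^2 : ℤ)):ℝ) := by push_cast; rfl
    rw [this, eq_div_iff (by norm_num : (3:ℝ) ≠ 0)]
    exact_mod_cast congrArg (Int.cast (R := ℝ)) hZ
  rw [hSa]
  -- geometric sum
  have hb1 : (1:ℝ) < (β:ℝ) := by linarith
  have hb2ne : ((β:ℝ)^2) ≠ 1 := by nlinarith
  rw [geom_sum_eq hb2ne D]
  have hy1 : (1:ℝ) < (β:ℝ)^D := one_lt_pow₀ hb1 (by omega)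
  have hyD : ((β:ℝ)^2)^D = ((β:ℝ)^D)^2 := by
    rw [← pow_mul, mul_comm, pow_mul]
  rw [hyD]
  -- final algebra
  have hmR : (β:ℝ) = 2*(m:ℝ)+1 := by exact_mod_cast congrArg (Nat.cast (R := ℝ)) hm
  have hKR : (1:ℝ) ≤ (K:ℝ) := by exact_mod_cast hK
  have hRR : (1:ℝ) ≤ (R:ℝ) := by exact_mod_cast hR
  have hy0 : (β:ℝ)^D - 1 ≠ 0 := by linarith
  have hb0 : (β:ℝ) ≠ 0 := by linarith
  have hbm1 : (β:ℝ) - 1 ≠ 0 := by linarith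
  have hbp1 : (β:ℝ) + 1 ≠ 0 := by linarith
  have hK0 : (K:ℝ) ≠ 0 := by linarith
  have hR0 : (R:ℝ) ≠ 0 := by linarith
  rw [hM, hp, hc]
  have hmval : (m:ℝ) = ((β:ℝ)-1)/2 := by rw [hmR]; ring
  rw [hmval]
  linear_combination final_algebra (β:ℝ) ((β:ℝ)^D) (K:ℝ) (R:ℝ) σ2 vmax hb0 hbm1 hbp1 hy0 hK0 hR0
end

section
/- Let (Ω, 𝔉, P) be a probability space, Q ≥ 1 an integer, and F : ℝ^Q → ℝ a differentiable function whose gradient ∇F is L-Lipschitz with respect to the Euclidean norm for some L > 0, and which is bounded below: F(w) ≥ F* for all w. Let η > 0 satisfy η·L < 2, let B ≥ 0, let T ≥ 1, let w_0 ∈ ℝ^Q be deterministic, and let ĝ_0, …, ĝ_{T−1} : Ω → ℝ^Q be random vectors with ‖ĝ_t‖² integrable; define iterates w_{t+1} = w_t − η·ĝ_t. Assume for each t ∈ {0,…,T−1}: (i) E[⟨∇F(w_t), ĝ_t⟩] = E[‖∇F(w_t)‖²], and (ii) E[‖ĝ_t‖²] ≤ E[‖∇F(w_t)‖²] + B. Then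 (1/T)·Σ_{t=0}^{T−1} E[‖∇F(w_t)‖²] ≤ (F(w_0) − F*)/(T·η·(1 − η·L/2)) + ((η·L/2)/(1 − η·L/2))·B. -/
open MeasureTheory RealInnerProductSpace in
lemma quad_bound' {E : Type*} [NormedAddCommGroup E] [InnerProductSpace ℝ E] [CompleteSpace E]
    {F : E → ℝ} {L : ℝ} (hL : 0 ≤ L) (hdiff : Differentiable ℝ F)
    (hlip : ∀ x y, ‖gradient F x - gradient F y‖ ≤ L * ‖x - y‖)
    (x v : E) : |F (x + v) - F x - ⟪gradient F x, v⟫| ≤ L / 2 * ‖v‖ ^ 2 := by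
  have hF : ∀ s : ℝ, HasDerivAt (fun s : ℝ => F (x + s • v)) ⟪gradient F (x + s • v), v⟫ s := by
    intro s
    have h1 : HasDerivAt (fun s : ℝ => x + s • v) v s := by
      simpa using ((hasDerivAt_id s).smul_const v).const_add x
    have h2 := ((hdiff (x + s • v)).hasGradientAt).hasFDerivAt
    have h3 := h2.comp_hasDerivAt s h1
    simp only [InnerProductSpace.toDual_apply_apply] at h3
    exact h3
  have key : ∀ c : ℝ, |c| = 1 →
      c * (F (x + v) - F x - ⟪gradient F x, v⟫) ≤ L / 2 * ‖v‖ ^ 2 := by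
    intro c hc
    set u : ℝ → ℝ := fun s =>
      c * (F (x + s • v) - F x - s * ⟪gradient F x, v⟫) - L / 2 * s ^ 2 * ‖v‖ ^ 2 with hu_def
    have hu : ∀ s : ℝ, HasDerivAt u
        (c * (⟪gradient F (x + s • v), v⟫ - ⟪gradient F x, v⟫) - L * s * ‖v‖ ^ 2) s := by
      intro s
      have h2 : HasDerivAt (fun s : ℝ => s * ⟪gradient F x, v⟫) ⟪gradient F x, v⟫ s := by
        simpa using (hasDerivAt_id s).mul_const ⟪gradient F x, v⟫
      have h3 : HasDerivAt (fun s : ℝ => L / 2 * s ^ 2 * ‖v‖ ^ 2) (L * s * ‖v‖ ^ 2) s := by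
        have h4 : HasDerivAt (fun s : ℝ => s ^ 2) (2 * s) s := by
          simpa using hasDerivAt_pow 2 s
        have := (h4.const_mul (L / 2)).mul_const (‖v‖ ^ 2)
        rw [show L * s * ‖v‖ ^ 2 = L / 2 * (2 * s) * ‖v‖ ^ 2 by ring]; exact this
      exact ((((hF s).sub_const (F x)).sub h2).const_mul c).sub h3
    have hanti : AntitoneOn u (Set.Icc 0 1) := by
      apply antitoneOn_of_deriv_nonpos (convex_Icc 0 1)
      · exact Continuous.continuousOn (by
          exact continuous_iff_continuousAt.2 fun s => (hu s).continuousAt)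
      · exact fun s hs => ((hu s).differentiableAt).differentiableWithinAt
      · intro s hs
        rw [interior_Icc] at hs
        rw [(hu s).deriv]
        have h5 : c * (⟪gradient F (x + s • v), v⟫ - ⟪gradient F x, v⟫)
            ≤ L * s * ‖v‖ ^ 2 := by
          have h6 : c * (⟪gradient F (x + s • v), v⟫ - ⟪gradient F x, v⟫)
              ≤ |⟪gradient F (x + s • v) - gradient F x, v⟫| := by
            rw [inner_sub_left]
            calc c * (⟪gradient F (x + s • v), v⟫ - ⟪gradient F x, v⟫)
                ≤ |c * (⟪gradient F (x + s • v), v⟫ - ⟪gradient F x, v⟫)| := le_abs_self _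
              _ = |⟪gradient F (x + s • v), v⟫ - ⟪gradient F x, v⟫| := by
                  rw [abs_mul, hc, one_mul]
          refine h6.trans ?_
          calc |⟪gradient F (x + s • v) - gradient F x, v⟫|
              ≤ ‖gradient F (x + s • v) - gradient F x‖ * ‖v‖ := abs_real_inner_le_norm _ _
            _ ≤ (L * ‖(x + s • v) - x‖) * ‖v‖ := by
                exact mul_le_mul_of_nonneg_right (hlip _ _) (norm_nonneg _)
            _ = L * s * ‖v‖ ^ 2 := by
                rw [add_sub_cancel_left, norm_smul, Real.norm_eq_abs, abs_of_nonneg hs.1.le]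
                ring
        linarith
    have h01 := hanti (Set.left_mem_Icc.2 zero_le_one) (Set.right_mem_Icc.2 zero_le_one)
      zero_le_one
    have hu0 : u 0 = 0 := by simp [hu_def]
    have hu1 : u 1 = c * (F (x + v) - F x - ⟪gradient F x, v⟫) - L / 2 * ‖v‖ ^ 2 := by
      simp [hu_def]
    rw [hu0, hu1] at h01
    linarith
  rw [abs_le]
  constructor
  · have := key (-1) (by norm_num); linarith
  · have := key 1 (by norm_num); linarith


open MeasureTheory RealInnerProductSpace in
/-- Convergence rate of distributed training with a fixed learning rate `η` under
stochastic gradient aggregation with unbiased aggregated gradients (i) and bounded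
second moment (ii):
`(1/T)·Σ_t E[‖∇F(w_t)‖²] ≤ (F(w_0) − F*)/(T·η·(1 − η·L/2)) + ((η·L/2)/(1 − η·L/2))·B`. -/
theorem sgd_convergence_rate {Ω : Type*} [MeasurableSpace Ω]
    (P : Measure Ω) [IsProbabilityMeasure P] (Q : ℕ) (hQ : 1 ≤ Q)
    (F : EuclideanSpace ℝ (Fin Q) → ℝ) (Fstar L : ℝ) (hL : 0 < L)
    (hdiff : Differentiable ℝ F)
    (hlip : ∀ x y, ‖gradient F x - gradient F y‖ ≤ L * ‖x - y‖)
    (hbound : ∀ w, Fstar ≤ F w)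
    (η : ℝ) (hη : 0 < η) (hηL : η * L < 2)
    (B : ℝ) (hB : 0 ≤ B) (T : ℕ) (hT : 1 ≤ T)
    (w0 : EuclideanSpace ℝ (Fin Q))
    (g : ℕ → Ω → EuclideanSpace ℝ (Fin Q))
    (hgmeas : ∀ t, Measurable (g t))
    (hgint : ∀ t, Integrable (fun ω => ‖g t ω‖ ^ 2) P)
    (w : ℕ → Ω → EuclideanSpace ℝ (Fin Q))
    (hw0 : ∀ ω, w 0 ω = w0)
    (hwrec : ∀ t ω, w (t + 1) ω = w t ω - η • g t ω)
    (hunbiased : ∀ t < T, ∫ ω, ⟪gradient F (w t ω), g t ω⟫ ∂P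
      = ∫ ω, ‖gradient F (w t ω)‖ ^ 2 ∂P)
    (hsecond : ∀ t < T, ∫ ω, ‖g t ω‖ ^ 2 ∂P
      ≤ (∫ ω, ‖gradient F (w t ω)‖ ^ 2 ∂P) + B) :
    1 / (T : ℝ) * ∑ t ∈ Finset.range T, ∫ ω, ‖gradient F (w t ω)‖ ^ 2 ∂P
      ≤ (F w0 - Fstar) / ((T : ℝ) * η * (1 - η * L / 2))
        + (η * L / 2) / (1 - η * L / 2) * B := by
  have hquad := quad_bound' hL.le hdiff hlip
  have hc : 0 < 1 - η * L / 2 := by nlinarith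
  have hTpos : (0 : ℝ) < T := by exact_mod_cast hT
  -- measurability of w
  have hwmeas : ∀ t, Measurable (w t) := by
    intro t
    induction t with
    | zero =>
        have : w 0 = fun _ => w0 := funext hw0
        rw [this]; exact measurable_const
    | succ t ih =>
        have : w (t + 1) = fun ω => w t ω - η • g t ω := funext (hwrec t)
        rw [this]; exact ih.sub ((hgmeas t).const_smul η)
  -- Lipschitz gradient
  have hlipG : LipschitzWith (Real.toNNReal L) (gradient F) := by
    apply LipschitzWith.of_dist_le_mul
    intro x y
    rw [dist_eq_norm, dist_eq_norm]
    simpa [Real.coe_toNNReal _ hL.le] using hlip x y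
  -- MemLp facts
  have hgLp : ∀ t, MemLp (g t) 2 P := fun t =>
    (memLp_two_iff_integrable_sq_norm (hgmeas t).aestronglyMeasurable).2 (hgint t)
  have hwLp : ∀ t, MemLp (w t) 2 P := by
    intro t
    induction t with
    | zero =>
        have : w 0 = fun _ => w0 := funext hw0
        rw [this]; exact memLp_const w0
    | succ t ih =>
        have : w (t + 1) = fun ω => w t ω - η • g t ω := funext (hwrec t)
        rw [this]; exact ih.sub ((hgLp t).const_smul η)
  have hGwLp : ∀ t, MemLp (fun ω => gradient F (w t ω)) 2 P := by
    intro t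
    have hlip0 : LipschitzWith (Real.toNNReal L) (fun x => gradient F x - gradient F 0) := by
      apply LipschitzWith.of_dist_le_mul
      intro x y
      rw [dist_eq_norm]
      simpa [Real.coe_toNNReal _ hL.le, dist_eq_norm, sub_sub_sub_cancel_right] using hlip x y
    have h0 := hlip0.comp_memLp (by simp) (hwLp t)
    have h1 := h0.add (memLp_const (gradient F 0))
    have : ((fun x => gradient F x - gradient F 0) ∘ w t) + (fun _ => gradient F 0)
        = fun ω => gradient F (w t ω) := by
      funext ω; simp [Function.comp]
    rwa [this] at h1
  have hGsq_int : ∀ t, Integrable (fun ω => ‖gradient F (w t ω)‖ ^ 2) P := fun t =>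
    (memLp_two_iff_integrable_sq_norm (hGwLp t).aestronglyMeasurable).1 (hGwLp t)
  -- integrability of the inner product
  have hinner_int : ∀ t, Integrable (fun ω => ⟪gradient F (w t ω), g t ω⟫) P := by
    intro t
    have h1 := MeasureTheory.L2.integrable_inner (𝕜 := ℝ)
      ((hGwLp t).toLp _) ((hgLp t).toLp _)
    refine h1.congr ?_
    filter_upwards [(hGwLp t).coeFn_toLp, (hgLp t).coeFn_toLp] with ω h2 h3
    rw [h2, h3]
  -- integrability of the product of norms
  have hprod_int : ∀ t, Integrable (fun ω => ‖gradient F (w t ω)‖ * ‖g t ω‖) P := by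
    intro t
    have h1 := MeasureTheory.L2.integrable_inner (𝕜 := ℝ) (E := ℝ)
      (((hGwLp t).norm).toLp _) (((hgLp t).norm).toLp _)
    refine h1.congr ?_
    filter_upwards [((hGwLp t).norm).coeFn_toLp, ((hgLp t).norm).coeFn_toLp] with ω h2 h3
    rw [h2, h3]
    simp [RCLike.inner_apply, mul_comm]
  -- integrability of F ∘ w t
  have hFw_int : ∀ t, Integrable (fun ω => F (w t ω)) P := by
    intro t
    induction t with
    | zero =>
        have : (fun ω => F (w 0 ω)) = fun _ => F w0 := by funext ω; rw [hw0]
        rw [this]; exact integrable_const _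
    | succ t ih =>
        have hd : Integrable (fun ω => F (w (t + 1) ω) - F (w t ω)) P := by
          apply Integrable.mono'
            (g := fun ω => η * (‖gradient F (w t ω)‖ * ‖g t ω‖) + L / 2 * η ^ 2 * ‖g t ω‖ ^ 2)
          · exact ((hprod_int t).const_mul η).add ((hgint t).const_mul (L / 2 * η ^ 2))
          · exact ((hdiff.continuous.measurable.comp (hwmeas (t + 1))).sub
              (hdiff.continuous.measurable.comp (hwmeas t))).aestronglyMeasurable
          · refine Filter.Eventually.of_forall fun ω => ?_
            have hq := hquad (w t ω) (-(η • g t ω))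
            have hrw : w t ω + -(η • g t ω) = w (t + 1) ω := by
              rw [hwrec t ω]; abel
            rw [hrw] at hq
            have hin : |⟪gradient F (w t ω), -(η • g t ω)⟫|
                ≤ η * (‖gradient F (w t ω)‖ * ‖g t ω‖) := by
              calc |⟪gradient F (w t ω), -(η • g t ω)⟫|
                  ≤ ‖gradient F (w t ω)‖ * ‖-(η • g t ω)‖ := abs_real_inner_le_norm _ _
                _ = η * (‖gradient F (w t ω)‖ * ‖g t ω‖) := by
                    rw [norm_neg, norm_smul, Real.norm_eq_abs, abs_of_pos hη]; ring
            have hn : ‖-(η • g t ω)‖ ^ 2 = η ^ 2 * ‖g t ω‖ ^ 2 := by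
              rw [norm_neg, norm_smul, Real.norm_eq_abs, abs_of_pos hη, mul_pow]
            rw [Real.norm_eq_abs]
            have h7 := abs_sub_abs_le_abs_sub (F (w (t + 1) ω) - F (w t ω))
                ⟪gradient F (w t ω), -(η • g t ω)⟫
            have h8 : |F (w (t + 1) ω) - F (w t ω)|
                ≤ |F (w (t + 1) ω) - F (w t ω) - ⟪gradient F (w t ω), -(η • g t ω)⟫|
                  + |⟪gradient F (w t ω), -(η • g t ω)⟫| := by
              have := abs_add_le (F (w (t + 1) ω) - F (w t ω) - ⟪gradient F (w t ω), -(η • g t ω)⟫)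
                ⟪gradient F (w t ω), -(η • g t ω)⟫
              simpa using this
            have h9 : L / 2 * ‖-(η • g t ω)‖ ^ 2 = L / 2 * η ^ 2 * ‖g t ω‖ ^ 2 := by
              rw [hn]; ring
            linarith
        have : (fun ω => F (w (t + 1) ω))
            = fun ω => F (w t ω) + (F (w (t + 1) ω) - F (w t ω)) := by
          funext ω; ring
        rw [this]; exact ih.add hd
  -- per-step descent inequality
  have step : ∀ t < T, ∫ ω, F (w (t + 1) ω) ∂P
      ≤ (∫ ω, F (w t ω) ∂P) - η * (1 - η * L / 2) * (∫ ω, ‖gradient F (w t ω)‖ ^ 2 ∂P)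
        + η ^ 2 * L / 2 * B := by
    intro t ht
    have hpt : ∀ ω, F (w (t + 1) ω) ≤ F (w t ω) - η * ⟪gradient F (w t ω), g t ω⟫
        + L / 2 * η ^ 2 * ‖g t ω‖ ^ 2 := by
      intro ω
      have hq := hquad (w t ω) (-(η • g t ω))
      have hrw : w t ω + -(η • g t ω) = w (t + 1) ω := by rw [hwrec t ω]; abel
      rw [hrw, abs_le] at hq
      have h1 : ⟪gradient F (w t ω), -(η • g t ω)⟫ = -(η * ⟪gradient F (w t ω), g t ω⟫) := by
        rw [inner_neg_right, real_inner_smul_right]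
      have h2 : ‖-(η • g t ω)‖ ^ 2 = η ^ 2 * ‖g t ω‖ ^ 2 := by
        rw [norm_neg, norm_smul, Real.norm_eq_abs, abs_of_pos hη, mul_pow]
      have := hq.2
      rw [h1, h2] at this
      linarith
    have hint1 : Integrable (fun ω => F (w t ω) - η * ⟪gradient F (w t ω), g t ω⟫) P :=
      (hFw_int t).sub ((hinner_int t).const_mul η)
    have hint2 : Integrable (fun ω => L / 2 * η ^ 2 * ‖g t ω‖ ^ 2) P :=
      (hgint t).const_mul (L / 2 * η ^ 2)
    have hint3 : Integrable (fun ω => η * ⟪gradient F (w t ω), g t ω⟫) P :=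
      (hinner_int t).const_mul η
    have hint : Integrable (fun ω => F (w t ω) - η * ⟪gradient F (w t ω), g t ω⟫
        + L / 2 * η ^ 2 * ‖g t ω‖ ^ 2) P := hint1.add hint2
    have hmono := integral_mono (hFw_int (t + 1)) hint hpt
    rw [integral_add hint1 hint2, integral_sub (hFw_int t) hint3,
      integral_const_mul, integral_const_mul, hunbiased t ht] at hmono
    have h3 := hsecond t ht
    nlinarith [mul_le_mul_of_nonneg_left h3 (by positivity : (0:ℝ) ≤ L / 2 * η ^ 2)]
  -- telescoping
  have tele : ∀ n ≤ T, ∫ ω, F (w n ω) ∂P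
      ≤ F w0 - η * (1 - η * L / 2)
          * (∑ t ∈ Finset.range n, ∫ ω, ‖gradient F (w t ω)‖ ^ 2 ∂P)
        + n * (η ^ 2 * L / 2 * B) := by
    intro n hn
    induction n with
    | zero =>
        have : (fun ω => F (w 0 ω)) = fun _ => F w0 := by funext ω; rw [hw0]
        simp [this]
    | succ n ih =>
        have h1 := ih (le_of_lt hn)
        have h2 := step n hn
        rw [Finset.sum_range_succ]
        push_cast
        linarith
  have hfinal := tele T le_rfl
  have hlow : Fstar ≤ ∫ ω, F (w T ω) ∂P := by
    have := integral_mono (integrable_const Fstar) (hFw_int T)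
      (fun ω => hbound (w T ω))
    simpa using this
  set S := ∑ t ∈ Finset.range T, ∫ ω, ‖gradient F (w t ω)‖ ^ 2 ∂P with hS
  have key : η * (1 - η * L / 2) * S ≤ F w0 - Fstar + T * (η ^ 2 * L / 2 * B) := by
    linarith
  have hc2 : 0 < η * (1 - η * L / 2) := by positivity
  have hT0 : (T : ℝ) ≠ 0 := ne_of_gt hTpos
  have hη0 : η ≠ 0 := ne_of_gt hη
  have hc0 : (1 - η * L / 2) ≠ 0 := ne_of_gt hc
  calc 1 / (T : ℝ) * S
      = (η * (1 - η * L / 2) * S) / ((T : ℝ) * (η * (1 - η * L / 2))) := by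
        rw [mul_comm ((T : ℝ)) (η * (1 - η * L / 2)),
          mul_div_mul_left _ _ (ne_of_gt hc2), one_div, inv_mul_eq_div]
    _ ≤ (F w0 - Fstar + T * (η ^ 2 * L / 2 * B)) / ((T : ℝ) * (η * (1 - η * L / 2))) := by
        apply div_le_div_of_nonneg_right key (by positivity)
    _ = (F w0 - Fstar) / ((T : ℝ) * η * (1 - η * L / 2))
        + (η * L / 2) / (1 - η * L / 2) * B := by
        rw [div_mul_eq_mul_div (η * L / 2) (1 - η * L / 2) B,
          div_add_div _ _ (by positivity : ((T : ℝ) * η * (1 - η * L / 2)) ≠ 0) hc0,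
          div_eq_div_iff (by positivity) (by positivity)]
        ring
end
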